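/- Suppose additionally that γ > 2, that b ∈ [0, 1/γ²], and that the series Σ_{i=1}^{∞} θ_i²·ε_i² converges. Then the series Σ_{i=1}^{∞} (2θ_i − 1)·δ_i converges; that is, the nonnegative sequence ((2θ_i − 1)·‖x_i − x_{i−1}‖²)_{i≥1} is summable. -/

import Mathlib

open RealInnerProductSpace Finset


lemma pnpg_sq_identity {E : Type*} [NormedAddCommGroup E] [InnerProductSpace ℝ E]
    (t : ℝ) (u v : E) :
    t * ((t - 1) * ‖u‖ ^ 2 + ‖v‖ ^ 2) = ‖(t - 1) • u + v‖ ^ 2 + (t - 1) * ‖u - v‖ ^ 2 := by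
  rw [norm_add_sq_real, norm_sub_sq_real, norm_smul, real_inner_smul_left]
  simp only [mul_pow, sq_abs, Real.norm_eq_abs]
  ring

lemma pnpg_convex_grad {E : Type*} [NormedAddCommGroup E] [InnerProductSpace ℝ E]
    [CompleteSpace E]
    {L : E → ℝ} (hconv : ConvexOn ℝ Set.univ L) {g a : E} (hg : HasGradientAt L g a)
    (y : E) : L a + ⟪y - a, g⟫ ≤ L y := by
  have hc : HasDerivAt (fun t : ℝ => a + t • (y - a)) (y - a) 0 := by
    simpa using ((hasDerivAt_id (0 : ℝ)).smul_const (y - a)).const_add a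
  have hF : HasFDerivAt L (InnerProductSpace.toDual ℝ E g) (a + (0:ℝ) • (y - a)) := by
    simpa using hg.hasFDerivAt
  have hφ : HasDerivAt (fun t : ℝ => L (a + t • (y - a))) ⟪g, y - a⟫ 0 := by
    have h := hF.comp_hasDerivAt 0 hc
    simp at h
    exact h
  have hslope : Filter.Tendsto (slope (fun t : ℝ => L (a + t • (y - a))) 0)
      (nhdsWithin 0 (Set.Ioi 0)) (nhds ⟪g, y - a⟫) := by
    have := hasDerivAt_iff_tendsto_slope.mp hφ
    exact this.mono_left (nhdsWithin_mono 0 (fun t ht => ne_of_gt ht))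
  have hev : ∀ᶠ t in nhdsWithin (0:ℝ) (Set.Ioi 0),
      slope (fun t : ℝ => L (a + t • (y - a))) 0 t ≤ L y - L a := by
    filter_upwards [Ioc_mem_nhdsGT_of_mem (Set.left_mem_Ico.mpr one_pos)] with t ht
    have h1 : L (a + t • (y - a)) ≤ (1 - t) * L a + t * L y := by
      have h0 := hconv.2 (Set.mem_univ a) (Set.mem_univ y)
        (by linarith [ht.2] : (0:ℝ) ≤ 1 - t) (le_of_lt ht.1) (by ring)
      have h2 : (1 - t) • a + t • y = a + t • (y - a) := by module
      rw [h2] at h0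
      simpa [smul_eq_mul] using h0
    rw [slope_def_field]
    have ht0 : (0:ℝ) < t := ht.1
    rw [sub_zero, div_le_iff₀ ht0]
    have h3 : L (a + (0:ℝ) • (y - a)) = L a := by simp
    rw [h3]
    nlinarith [h1]
  have h4 := le_of_tendsto hslope hev
  have hcomm : (⟪g, y - a⟫ : ℝ) = ⟪y - a, g⟫ := real_inner_comm _ _
  linarith [h4, hcomm.ge, hcomm.le]

lemma pnpg_proj_nonexp {E : Type*} [NormedAddCommGroup E] [InnerProductSpace ℝ E]
    {C : Set E} (hCconv : Convex ℝ C) {P : E → E} (hPmem : ∀ z, P z ∈ C)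
    (hPproj : ∀ z, ∀ y ∈ C, ‖z - P z‖ ≤ ‖z - y‖)
    (z : E) {c : E} (hc : c ∈ C) : ‖P z - c‖ ≤ ‖z - c‖ := by
  set p := P z with hp
  have key : (⟪z - p, c - p⟫ : ℝ) ≤ 0 := by
    by_contra hI
    push_neg at hI
    set I : ℝ := ⟪z - p, c - p⟫ with hIdef
    set M : ℝ := ‖c - p‖ ^ 2 with hM
    have hM0 : 0 < M := by
      rcases eq_or_lt_of_le (norm_nonneg (c - p)) with h | h
      · exfalso
        have : c - p = 0 := by rwa [eq_comm, norm_eq_zero] at h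
        rw [hIdef, this, inner_zero_right] at hI
        exact lt_irrefl 0 hI
      · positivity
    set t : ℝ := min 1 (I / M) with ht
    have ht0 : 0 < t := lt_min one_pos (div_pos hI hM0)
    have ht1 : t ≤ 1 := min_le_left _ _
    have hmem : p + t • (c - p) ∈ C := by
      have := hCconv (hPmem z) hc (by linarith : (0:ℝ) ≤ 1 - t) (le_of_lt ht0) (by ring)
      have heq : (1 - t) • p + t • c = p + t • (c - p) := by module
      rwa [heq] at this
    have hle := hPproj z _ hmem
    have hsq : ‖z - p‖ ^ 2 ≤ ‖z - (p + t • (c - p))‖ ^ 2 := by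
      have := pow_le_pow_left₀ (norm_nonneg _) hle 2
      exact this
    have hexp : ‖z - (p + t • (c - p))‖ ^ 2
        = ‖z - p‖ ^ 2 - 2 * t * I + t ^ 2 * M := by
      have h1 : z - (p + t • (c - p)) = (z - p) - t • (c - p) := by abel
      rw [h1, norm_sub_sq_real, real_inner_smul_right, norm_smul]
      simp only [mul_pow, sq_abs, Real.norm_eq_abs, hM]
      ring
    have htM : t * M ≤ I := by
      have := min_le_right 1 (I / M)
      calc t * M ≤ (I / M) * M := by nlinarith
        _ = I := by field_simp
    nlinarith [hsq, hexp, htM, ht0, hI]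
  have hfinal : ‖p - c‖ ^ 2 ≤ ‖z - c‖ ^ 2 := by
    have h1 : z - c = (z - p) + (p - c) := by abel
    rw [h1, norm_add_sq_real]
    have h2 : (⟪z - p, p - c⟫ : ℝ) = - ⟪z - p, c - p⟫ := by
      rw [show p - c = -(c - p) by abel, inner_neg_right]
    nlinarith [key, sq_nonneg ‖z - p‖]
  calc ‖p - c‖ = Real.sqrt (‖p - c‖ ^ 2) := by rw [Real.sqrt_sq (norm_nonneg _)]
    _ ≤ Real.sqrt (‖z - c‖ ^ 2) := Real.sqrt_le_sqrt hfinal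
    _ = ‖z - c‖ := Real.sqrt_sq (norm_nonneg _)


set_option maxHeartbeats 1600000 in
theorem pnpg_delta_summable {E : Type*} [NormedAddCommGroup E]
    [InnerProductSpace ℝ E] [FiniteDimensional ℝ E]
    (L R f : E → ℝ) (gradL : E → E)
    (hLconv : ConvexOn ℝ Set.univ L)
    (hLgrad : ∀ x, HasGradientAt L (gradL x) x)
    (hRconv : ConvexOn ℝ Set.univ R)
    (hf : ∀ x, f x = L x + R x)
    (C : Set E) (hCne : C.Nonempty) (hCcl : IsClosed C) (hCconv : Convex ℝ C)
    (P : E → E) (hPmem : ∀ z, P z ∈ C)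
    (hPproj : ∀ z, ∀ y ∈ C, ‖z - P z‖ ≤ ‖z - y‖)
    (γ b : ℝ) (hγ : 2 ≤ γ) (hb0 : 0 ≤ b) (hb1 : b ≤ 1 / 4)
    (β εs θ : ℤ → ℝ)
    (hβpos : ∀ i, 1 ≤ i → 0 < β i) (hεs : ∀ i, 1 ≤ i → 0 ≤ εs i)
    (hθ0 : θ 0 = 1) (hθ1 : θ 1 = 1)
    (hθ : ∀ i, 2 ≤ i → θ i = 1 / γ + Real.sqrt (b + (β (i - 1) / β i) * (θ (i - 1)) ^ 2))
    (hθge1 : ∀ i, 1 ≤ i → 1 ≤ θ i)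
    (x w : ℤ → E)
    (hw : ∀ i, 1 ≤ i →
      w i = P (x (i - 1) + ((θ (i - 1) - 1) / θ i) • (x (i - 1) - x (i - 2))))
    (hprox : ∀ i, 1 ≤ i → ∀ z, R z ≥ R (x i) +
      ⟪z - x i, (β i)⁻¹ • (w i - β i • gradL (w i) - x i)⟫ - (εs i) ^ 2 / (2 * β i))
    (hmaj : ∀ i, 1 ≤ i → L (x i) ≤ L (w i) + ⟪x i - w i, gradL (w i)⟫
      + ‖x i - w i‖ ^ 2 / (2 * β i))
    (hxC : ∀ i, 0 ≤ i → x i ∈ C)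
    (xstar : E) (hxstarC : xstar ∈ C) (hmin : ∀ z, f xstar ≤ f z)
    (hγ2 : 2 < γ) (hbγ : b ≤ 1 / γ ^ 2)
    (hE : Summable (fun n : ℕ => (θ ((n : ℤ) + 1)) ^ 2 * (εs ((n : ℤ) + 1)) ^ 2)) :
    Summable (fun n : ℕ =>
      (2 * θ ((n : ℤ) + 1) - 1) * ‖x ((n : ℤ) + 1) - x (n : ℤ)‖ ^ 2) := by
  have hγ0 : (0:ℝ) < γ := by linarith
  have hc0 : (0:ℝ) < 1 - 2/γ := by
    have : 2/γ < 1 := (div_lt_one hγ0).mpr hγ2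
    linarith
  obtain ⟨D, hD⟩ : ∃ D : ℤ → ℝ, D = fun i => f (x i) - f xstar := ⟨_, rfl⟩
  have hD0 : ∀ i : ℤ, 0 ≤ D i := fun i => by
    simp only [hD]; exact sub_nonneg.mpr (hmin (x i))
  obtain ⟨v, hv⟩ : ∃ v : ℤ → E, v = fun i => θ i • x i - (θ i - 1) • x (i - 1) - xstar :=
    ⟨_, rfl⟩
  obtain ⟨vb, hvb⟩ : ∃ vb : ℤ → E, vb = fun i => θ i • w i - (θ i - 1) • x (i - 1) - xstar :=
    ⟨_, rfl⟩
  -- Key per-step inequality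
  have key : ∀ i : ℤ, 1 ≤ i → ∀ z : E,
      2 * β i * (f (x i) - f z) ≤ ‖w i - z‖^2 - ‖x i - z‖^2 + εs i ^ 2 := by
    intro i hi z
    have hb := hβpos i hi
    have hgrad := pnpg_convex_grad hLconv (hLgrad (w i)) z
    have hm := hmaj i hi
    have hp := hprox i hi z
    set G := gradL (w i) with hG
    have hinner : (⟪z - x i, (β i)⁻¹ • (w i - β i • G - x i)⟫ : ℝ)
        = (β i)⁻¹ * (⟪z - x i, w i - x i⟫ - β i * ⟪z - x i, G⟫) := by
      rw [real_inner_smul_right]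
      congr 1
      rw [show w i - β i • G - x i = (w i - x i) - β i • G by abel, inner_sub_right,
        real_inner_smul_right]
    have hsplit : (⟪z - w i, G⟫ : ℝ) = ⟪z - x i, G⟫ + ⟪x i - w i, G⟫ := by
      rw [← inner_add_left]
      congr 1
      abel
    have hβne : β i ≠ 0 := ne_of_gt hb
    have hdist : (β i)⁻¹ * (⟪z - x i, w i - x i⟫ - β i * ⟪z - x i, G⟫)
        = (β i)⁻¹ * ⟪z - x i, w i - x i⟫ - ⟪z - x i, G⟫ := by
      field_simp
    rw [hinner, hdist] at hp
    have hsum : f (x i) - f z ≤ ‖x i - w i‖^2/(2*β i)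
        - (β i)⁻¹ * ⟪z - x i, w i - x i⟫ + εs i^2/(2*β i) := by
      rw [hf (x i), hf z]
      rw [hsplit] at hgrad
      linarith [hm, hgrad, hp]
    have hmul := mul_le_mul_of_nonneg_left hsum (by linarith : (0:ℝ) ≤ 2 * β i)
    have heq2 : 2 * β i * (‖x i - w i‖^2/(2*β i)
        - (β i)⁻¹ * ⟪z - x i, w i - x i⟫ + εs i^2/(2*β i))
        = ‖x i - w i‖^2 - 2 * ⟪z - x i, w i - x i⟫ + εs i^2 := by
      field_simp
    have hexp : ‖w i - z‖^2 - ‖x i - z‖^2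
        = ‖x i - w i‖^2 - 2 * ⟪z - x i, w i - x i⟫ := by
      rw [show w i - z = (w i - x i) + (x i - z) by abel, norm_add_sq_real]
      have e1 : ‖w i - x i‖ = ‖x i - w i‖ := norm_sub_rev _ _
      have e2 : (⟪w i - x i, x i - z⟫ : ℝ) = - ⟪z - x i, w i - x i⟫ := by
        rw [show x i - z = -(z - x i) by abel, inner_neg_right, real_inner_comm]
      rw [e1, e2]
      ring
    rw [hexp]
    linarith [hmul, heq2.le, heq2.ge]
  -- Combined inequality (weights θ(θ-1), θ)
  have master0 : ∀ i : ℤ, 1 ≤ i →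
      2*β i*θ i^2*D i - 2*β i*θ i*(θ i - 1)*D (i-1)
        ≤ ‖vb i‖^2 - ‖v i‖^2 + θ i^2*εs i^2 := by
    intro i hi
    have hA := key i hi (x (i-1))
    have hB := key i hi xstar
    have hθi := hθge1 i hi
    have hDdiff : f (x i) - f (x (i-1)) = D i - D (i-1) := by simp only [hD]; ring
    have hDi : f (x i) - f xstar = D i := by simp only [hD]
    rw [hDdiff] at hA
    rw [hDi] at hB
    have I1 := pnpg_sq_identity (θ i) (w i - x (i-1)) (w i - xstar)
    have I2 := pnpg_sq_identity (θ i) (x i - x (i-1)) (x i - xstar)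
    have e1 : (θ i - 1) • (w i - x (i-1)) + (w i - xstar) = vb i := by
      simp only [hvb]; module
    have e2 : (θ i - 1) • (x i - x (i-1)) + (x i - xstar) = v i := by
      simp only [hv]; module
    have e3 : (w i - x (i-1)) - (w i - xstar) = xstar - x (i-1) := by abel
    have e4 : (x i - x (i-1)) - (x i - xstar) = xstar - x (i-1) := by abel
    rw [e1, e3] at I1
    rw [e2, e4] at I2
    have p1 := mul_le_mul_of_nonneg_left hA
      (by nlinarith : (0:ℝ) ≤ θ i * (θ i - 1))
    have p2 := mul_le_mul_of_nonneg_left hB (by linarith : (0:ℝ) ≤ θ i)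
    linarith [p1, p2, I1, I2]
  -- projection bound on vb
  have hvble : ∀ i : ℤ, 1 ≤ i → ‖vb i‖ ≤ ‖v (i-1)‖ := by
    intro i hi
    have hθi := hθge1 i hi
    have hθpos : 0 < θ i := by linarith
    have hθne : θ i ≠ 0 := ne_of_gt hθpos
    set cpt : E := (1 - 1/θ i) • x (i-1) + (1/θ i) • xstar with hcpt
    have hcin : cpt ∈ C := by
      have h1 : (0:ℝ) ≤ 1 - 1/θ i := by
        have : 1/θ i ≤ 1 := by
          rw [div_le_one hθpos]; exact hθi
        linarith
      exact hCconv (hxC (i-1) (by omega)) hxstarC h1 (by positivity) (by ring)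
    have e1 : θ i • (w i - cpt) = vb i := by
      simp only [hcpt, hvb]
      match_scalars <;> field_simp
    set y : E := x (i-1) + ((θ (i-1) - 1)/θ i) • (x (i-1) - x (i-2)) with hy
    have e2 : θ i • (y - cpt) = v (i-1) := by
      simp only [hy, hcpt, hv]
      rw [show i - 1 - 1 = i - 2 by ring]
      match_scalars <;> field_simp <;> ring
    have hwi : w i = P y := by rw [hw i hi]
    have hproj := pnpg_proj_nonexp hCconv hPmem hPproj y hcin
    rw [← hwi] at hproj
    calc ‖vb i‖ = ‖θ i • (w i - cpt)‖ := by rw [e1]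
      _ = θ i * ‖w i - cpt‖ := by
          rw [norm_smul, Real.norm_eq_abs, abs_of_pos hθpos]
      _ ≤ θ i * ‖y - cpt‖ := mul_le_mul_of_nonneg_left hproj (le_of_lt hθpos)
      _ = ‖θ i • (y - cpt)‖ := by
          rw [norm_smul, Real.norm_eq_abs, abs_of_pos hθpos]
      _ = ‖v (i-1)‖ := by rw [e2]
  -- θ recursion algebra
  have hrec : ∀ i : ℤ, 2 ≤ i →
      β i * θ i^2 = β (i-1) * θ (i-1)^2 + (2/γ)*β i*θ i + β i*(b - 1/γ^2) := by
    intro i hi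
    have hb1 := hβpos i (by omega)
    have hb2 := hβpos (i-1) (by omega)
    have harg : 0 ≤ b + (β (i-1)/β i)*θ (i-1)^2 := by positivity
    have h1 : θ i - 1/γ = Real.sqrt (b + (β (i-1)/β i)*θ (i-1)^2) := by
      rw [hθ i hi]; ring
    have h2 : (θ i - 1/γ)^2 = b + (β (i-1)/β i)*θ (i-1)^2 := by
      rw [h1, Real.sq_sqrt harg]
    have hβne : β i ≠ 0 := ne_of_gt hb1
    have h3 : β i * ((β (i-1)/β i)*θ (i-1)^2) = β (i-1)*θ (i-1)^2 := by
      field_simp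
    have hγne : γ ≠ 0 := ne_of_gt hγ0
    linear_combination (β i) * h2 + h3
  -- master step, i ≥ 2
  have mstep : ∀ i : ℤ, 2 ≤ i →
      2*β i*θ i^2*D i + ‖v i‖^2 + 2*(1-2/γ)*β i*θ i*D (i-1)
        ≤ 2*β (i-1)*θ (i-1)^2*D (i-1) + ‖v (i-1)‖^2 + θ i^2*εs i^2 := by
    intro i hi
    have h1 := master0 i (by omega)
    have h2 := hvble i (by omega)
    have h2' : ‖vb i‖^2 ≤ ‖v (i-1)‖^2 := pow_le_pow_left₀ (norm_nonneg _) h2 2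
    have h3 := hrec i hi
    have hD1 := hD0 (i-1)
    have hb1 := hβpos i (by omega)
    have h5 : β i*θ i*(θ i - 1)*D (i-1)
        = (β (i-1)*θ (i-1)^2 - (1-2/γ)*β i*θ i + β i*(b - 1/γ^2))*D (i-1) := by
      linear_combination D (i-1) * h3
    have h6 : β i*(b - 1/γ^2)*D (i-1) ≤ 0 := by
      have hbb : b - 1/γ^2 ≤ 0 := by linarith
      have : β i*(b - 1/γ^2) ≤ 0 := mul_nonpos_of_nonneg_of_nonpos (le_of_lt hb1) hbb
      exact mul_nonpos_of_nonpos_of_nonneg this hD1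
    linarith [h1, h2', h5, h6]
  -- master base i = 1
  have mbase : 2*β 1*θ 1^2*D 1 + ‖v 1‖^2 ≤ ‖v 0‖^2 + θ 1^2*εs 1^2 := by
    have h1 := master0 1 le_rfl
    have h2 := hvble 1 le_rfl
    rw [show (1:ℤ)-1 = 0 by norm_num] at h1 h2
    have h2' : ‖vb 1‖^2 ≤ ‖v 0‖^2 := pow_le_pow_left₀ (norm_nonneg _) h2 2
    rw [hθ1] at h1 ⊢
    norm_num at h1 ⊢
    linarith [h1, h2']
  -- delta chain per step
  have dstep : ∀ i : ℤ, 1 ≤ i →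
      θ i^2*‖x i - x (i-1)‖^2 + 2*β i*θ i^2*D i
        ≤ (θ (i-1)-1)^2*‖x (i-1) - x (i-2)‖^2 + 2*β i*θ i^2*D (i-1) + θ i^2*εs i^2 := by
    intro i hi
    have hA := key i hi (x (i-1))
    have hθi := hθge1 i hi
    have hθpos : 0 < θ i := by linarith
    have hθi1 : 1 ≤ θ (i-1) := by
      rcases eq_or_lt_of_le hi with h | h
      · rw [show i - 1 = 0 by omega, hθ0]
      · exact hθge1 (i-1) (by omega)
    have hwnorm : θ i * ‖w i - x (i-1)‖ ≤ (θ (i-1) - 1) * ‖x (i-1) - x (i-2)‖ := by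
      have hwi := hw i hi
      have hproj := pnpg_proj_nonexp hCconv hPmem hPproj
        (x (i-1) + ((θ (i-1)-1)/θ i) • (x (i-1) - x (i-2))) (hxC (i-1) (by omega))
      rw [← hwi] at hproj
      have he : x (i-1) + ((θ (i-1)-1)/θ i) • (x (i-1) - x (i-2)) - x (i-1)
          = ((θ (i-1)-1)/θ i) • (x (i-1) - x (i-2)) := by abel
      have hcoef : (0:ℝ) ≤ (θ (i-1)-1)/θ i := div_nonneg (by linarith) (by linarith)
      rw [he, norm_smul, Real.norm_eq_abs, abs_of_nonneg hcoef] at hproj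
      have hθne : θ i ≠ 0 := ne_of_gt hθpos
      calc θ i * ‖w i - x (i-1)‖
          ≤ θ i * (((θ (i-1)-1)/θ i) * ‖x (i-1) - x (i-2)‖) :=
            mul_le_mul_of_nonneg_left hproj (by linarith)
        _ = (θ (i-1)-1)*‖x (i-1) - x (i-2)‖ := by field_simp
    have hw2 : θ i^2*‖w i - x (i-1)‖^2 ≤ (θ (i-1)-1)^2*‖x (i-1) - x (i-2)‖^2 := by
      have h := mul_self_le_mul_self
        (mul_nonneg (by linarith : (0:ℝ) ≤ θ i) (norm_nonneg (w i - x (i-1)))) hwnorm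
      have e1 : θ i^2*‖w i - x (i-1)‖^2
          = (θ i * ‖w i - x (i-1)‖)*(θ i * ‖w i - x (i-1)‖) := by ring
      have e2 : (θ (i-1)-1)^2*‖x (i-1) - x (i-2)‖^2
          = ((θ (i-1)-1)*‖x (i-1) - x (i-2)‖)*((θ (i-1)-1)*‖x (i-1) - x (i-2)‖) := by ring
      rw [e1, e2]
      exact h
    have hDdiff : f (x i) - f (x (i-1)) = D i - D (i-1) := by simp only [hD]; ring
    rw [hDdiff] at hA
    have hA' := mul_le_mul_of_nonneg_left hA (sq_nonneg (θ i))
    linarith [hA', hw2]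
  -- partial sums of error series
  have hsnn : ∀ k : ℕ, (0:ℝ) ≤ θ ((k:ℤ)+1)^2*εs ((k:ℤ)+1)^2 := fun k => by positivity
  obtain ⟨T, hT⟩ : ∃ T : ℝ, T = ∑' n : ℕ, θ ((n:ℤ)+1)^2*εs ((n:ℤ)+1)^2 := ⟨_, rfl⟩
  have hpartial : ∀ M : ℕ,
      ∑ k ∈ Finset.range M, θ ((k:ℤ)+1)^2*εs ((k:ℤ)+1)^2 ≤ T := by
    intro M
    rw [hT]
    exact hE.sum_le_tsum _ (fun i _ => hsnn i)
  -- first induction: energy bound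
  have claimG : ∀ N : ℕ,
      (2*β ((N:ℤ)+1)*θ ((N:ℤ)+1)^2*D ((N:ℤ)+1) + ‖v ((N:ℤ)+1)‖^2)
        + ∑ k ∈ Finset.range N, 2*(1-2/γ)*β ((k:ℤ)+2)*θ ((k:ℤ)+2)*D ((k:ℤ)+1)
      ≤ ‖v 0‖^2 + ∑ k ∈ Finset.range (N+1), θ ((k:ℤ)+1)^2*εs ((k:ℤ)+1)^2 := by
    intro N
    induction N with
    | zero =>
      simp only [Finset.range_zero, Finset.sum_empty, Finset.sum_range_one,
        Nat.cast_zero, zero_add, add_zero]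
      linarith [mbase]
    | succ N ih =>
      have hm := mstep ((N:ℤ)+2) (by omega)
      rw [show ((N:ℤ)+2)-1 = (N:ℤ)+1 by ring] at hm
      rw [Finset.sum_range_succ, Finset.sum_range_succ (n := N+1)]
      push_cast
      push_cast at ih
      rw [show ((N:ℤ)+1)+1 = (N:ℤ)+2 by ring]
      linarith [hm, ih]
  have boundG : ∀ N : ℕ,
      ∑ k ∈ Finset.range N, 2*(1-2/γ)*β ((k:ℤ)+2)*θ ((k:ℤ)+2)*D ((k:ℤ)+1)
        ≤ ‖v 0‖^2 + T := by
    intro N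
    have h1 := claimG N
    have h2 : (0:ℝ) ≤ 2*β ((N:ℤ)+1)*θ ((N:ℤ)+1)^2*D ((N:ℤ)+1) := by
      have hb := hβpos ((N:ℤ)+1) (by omega)
      have hd := hD0 ((N:ℤ)+1)
      positivity
    have h3 := hpartial (N+1)
    linarith [h1, h2, h3, sq_nonneg ‖v ((N:ℤ)+1)‖]
  -- second induction
  have claimH : ∀ N : ℕ,
      (θ ((N:ℤ)+1)^2*‖x ((N:ℤ)+1) - x (N:ℤ)‖^2
        + 2*β ((N:ℤ)+1)*θ ((N:ℤ)+1)^2*D ((N:ℤ)+1))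
      + ∑ k ∈ Finset.range N, (2*θ ((k:ℤ)+1) - 1)*‖x ((k:ℤ)+1) - x (k:ℤ)‖^2
      ≤ 2*β 1*D 0
        + (2/((1-2/γ)*γ))
          * (∑ k ∈ Finset.range N, 2*(1-2/γ)*β ((k:ℤ)+2)*θ ((k:ℤ)+2)*D ((k:ℤ)+1))
        + ∑ k ∈ Finset.range (N+1), θ ((k:ℤ)+1)^2*εs ((k:ℤ)+1)^2 := by
    intro N
    induction N with
    | zero =>
      simp only [Finset.range_zero, Finset.sum_empty, Finset.sum_range_one,
        Nat.cast_zero, zero_add, add_zero, mul_zero]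
      have hd := dstep 1 le_rfl
      rw [show (1:ℤ)-1 = 0 by norm_num, show (1:ℤ)-2 = -1 by norm_num, hθ0, hθ1] at hd
      rw [hθ1]
      norm_num at hd ⊢
      linarith [hd]
    | succ N ih =>
      have hd := dstep ((N:ℤ)+2) (by omega)
      rw [show ((N:ℤ)+2)-1 = (N:ℤ)+1 by ring, show ((N:ℤ)+2)-2 = (N:ℤ) by ring] at hd
      have hrec2 := hrec ((N:ℤ)+2) (by omega)
      rw [show ((N:ℤ)+2)-1 = (N:ℤ)+1 by ring] at hrec2
      have hDn := hD0 ((N:ℤ)+1)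
      have hbn := hβpos ((N:ℤ)+2) (by omega)
      have hbb : b - 1/γ^2 ≤ 0 := by linarith
      -- 2 β_{N+2} θ_{N+2}^2 D_{N+1} ≤ 2 β_{N+1} θ_{N+1}^2 D_{N+1} + (4/γ) β_{N+2} θ_{N+2} D_{N+1}
      have hkey : 2*β ((N:ℤ)+2)*θ ((N:ℤ)+2)^2*D ((N:ℤ)+1)
          ≤ 2*β ((N:ℤ)+1)*θ ((N:ℤ)+1)^2*D ((N:ℤ)+1)
            + (2/((1-2/γ)*γ)) * (2*(1-2/γ)*β ((N:ℤ)+2)*θ ((N:ℤ)+2)*D ((N:ℤ)+1)) := by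
        have heq : (2/((1-2/γ)*γ)) * (2*(1-2/γ)*β ((N:ℤ)+2)*θ ((N:ℤ)+2)*D ((N:ℤ)+1))
            = (4/γ)*β ((N:ℤ)+2)*θ ((N:ℤ)+2)*D ((N:ℤ)+1) := by
          have hne : (1-2/γ) ≠ 0 := ne_of_gt hc0
          have hγne : γ ≠ 0 := ne_of_gt hγ0
          have hne2 : γ - 2 ≠ 0 := ne_of_gt (by linarith)
          rw [show (1-2/γ)*γ = γ - 2 by field_simp]
          field_simp
          ring
        rw [heq]
        have hmul : β ((N:ℤ)+2)*(b - 1/γ^2)*D ((N:ℤ)+1) ≤ 0 :=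
          mul_nonpos_of_nonpos_of_nonneg
            (mul_nonpos_of_nonneg_of_nonpos (le_of_lt hbn) hbb) hDn
        have h5 : 2*β ((N:ℤ)+2)*θ ((N:ℤ)+2)^2*D ((N:ℤ)+1)
            = 2*β ((N:ℤ)+1)*θ ((N:ℤ)+1)^2*D ((N:ℤ)+1)
              + (4/γ)*β ((N:ℤ)+2)*θ ((N:ℤ)+2)*D ((N:ℤ)+1)
              + 2*(β ((N:ℤ)+2)*(b - 1/γ^2)*D ((N:ℤ)+1)) := by
          linear_combination 2*D ((N:ℤ)+1) * hrec2
        linarith [h5, hmul]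
      rw [Finset.sum_range_succ, Finset.sum_range_succ (n := N+1),
        Finset.sum_range_succ (f := fun k =>
          2*(1-2/γ)*β ((k:ℤ)+2)*θ ((k:ℤ)+2)*D ((k:ℤ)+1))]
      push_cast
      push_cast at ih
      rw [show ((N:ℤ)+1)+1 = (N:ℤ)+2 by ring]
      have hcpos : (0:ℝ) ≤ 2/((1-2/γ)*γ) :=
        div_nonneg (by norm_num) (mul_nonneg (le_of_lt hc0) (le_of_lt hγ0))
      linarith [hd, ih, hkey]
  -- final assembly
  apply summable_of_sum_range_le
    (c := 2*β 1*D 0 + (2/((1-2/γ)*γ)) * (‖v 0‖^2 + T) + T)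
  · intro n
    have h1 := hθge1 ((n:ℤ)+1) (by omega)
    have : (0:ℝ) ≤ 2*θ ((n:ℤ)+1) - 1 := by linarith
    positivity
  · intro N
    have h1 := claimH N
    have h2 : (0:ℝ) ≤ θ ((N:ℤ)+1)^2*‖x ((N:ℤ)+1) - x (N:ℤ)‖^2 := by positivity
    have h3 : (0:ℝ) ≤ 2*β ((N:ℤ)+1)*θ ((N:ℤ)+1)^2*D ((N:ℤ)+1) := by
      have hb := hβpos ((N:ℤ)+1) (by omega)
      have hd := hD0 ((N:ℤ)+1)
      positivity
    have h4 := boundG N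
    have h5 := hpartial (N+1)
    have hcpos : (0:ℝ) ≤ 2/((1-2/γ)*γ) :=
      div_nonneg (by norm_num) (mul_nonneg (le_of_lt hc0) (le_of_lt hγ0))
    have h6 := mul_le_mul_of_nonneg_left h4 hcpos
    linarith [h1, h2, h3, h5, h6]
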